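/- Suppose that for every prime p, s(C_p³) < 20370(p−1) + 1, s(C_p²) = 4(p−1)+1, and s(C_p) = 2(p−1)+1. Then for every natural number n ≥ 2, s(C_n³) ≤ 20370(n−1) + 1. -/

import Mathlib

/-- The `m`-th Davenport constant: smallest `t` such that every sequence (multiset) over `G`
of length `≥ t` contains `m` disjoint non-empty zero-sum subsequences. -/
noncomputable def DavenportM (G : Type*) [AddCommGroup G] (m : ℕ) : ℕ :=
  sInf {t | ∀ S : Multiset G, t ≤ Multiset.card S →
    ∃ L : Multiset (Multiset G), Multiset.card L = m ∧
      (∀ T ∈ L, T ≠ 0 ∧ T.sum = 0) ∧ L.sum ≤ S}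

/-- The Davenport constant: smallest `t` such that every sequence over `G` of length `≥ t`
has a non-empty zero-sum subsequence. -/
noncomputable def Davenport (G : Type*) [AddCommGroup G] : ℕ :=
  sInf {t | ∀ S : Multiset G, t ≤ Multiset.card S → ∃ T ≤ S, T ≠ 0 ∧ T.sum = 0}

/-- `η(G)`: smallest `t` such that every sequence over `G` of length `≥ t` has a non-empty
zero-sum subsequence of length at most `exp G`. -/
noncomputable def etaC (G : Type*) [AddCommGroup G] : ℕ :=
  sInf {t | ∀ S : Multiset G, t ≤ Multiset.card S →
    ∃ T ≤ S, T ≠ 0 ∧ T.sum = 0 ∧ Multiset.card T ≤ AddMonoid.exponent G}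

/-- The Erdős–Ginzburg–Ziv constant `s(G)`: smallest `t` such that every sequence over `G` of
length `≥ t` has a zero-sum subsequence of length exactly `exp G`. -/
noncomputable def egz (G : Type*) [AddCommGroup G] : ℕ :=
  sInf {t | ∀ S : Multiset G, t ≤ Multiset.card S →
    ∃ T ≤ S, T.sum = 0 ∧ Multiset.card T = AddMonoid.exponent G}

/-! ### Auxiliary material -/

/-- Core zero-sum property: every sequence of length at least `t` has a zero-sum
subsequence of length exactly `e`. -/
def ZSProp (G : Type*) [AddCommGroup G] (e t : ℕ) : Prop :=
  ∀ S : Multiset G, t ≤ Multiset.card S →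
    ∃ T ≤ S, T.sum = 0 ∧ Multiset.card T = e

lemma ZSProp.mono {G : Type*} [AddCommGroup G] {e t t' : ℕ} (h : ZSProp G e t)
    (htt : t ≤ t') : ZSProp G e t' := fun S hS => h S (le_trans htt hS)

lemma egz_eq {G : Type*} [AddCommGroup G] :
    egz G = sInf {t | ZSProp G (AddMonoid.exponent G) t} := rfl

lemma exponent_triple (n : ℕ) :
    AddMonoid.exponent (ZMod n × ZMod n × ZMod n) = n := by
  rw [AddMonoid.exponent_prod, AddMonoid.exponent_prod, ZMod.exponent]
  simp [Nat.lcm_self]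

/-- Pigeonhole: for a finite group the defining set is nonempty. -/
lemma zs_nonempty (G : Type*) [AddCommGroup G] [Fintype G] [DecidableEq G]
    (he : 0 < AddMonoid.exponent G) :
    ZSProp G (AddMonoid.exponent G) (Fintype.card G * (AddMonoid.exponent G - 1) + 1) := by
  set e := AddMonoid.exponent G with hedef
  intro S hS
  have hex : ∃ g : G, e ≤ S.count g := by
    by_contra hc
    push_neg at hc
    have h1 : (Multiset.card S : ℕ) = ∑ a ∈ S.toFinset, S.count a :=
      (Multiset.toFinset_sum_count_eq S).symm
    have h2 : ∑ a ∈ S.toFinset, S.count a ≤ S.toFinset.card * (e - 1) := by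
      calc ∑ a ∈ S.toFinset, S.count a ≤ ∑ _a ∈ S.toFinset, (e - 1) :=
            Finset.sum_le_sum (fun a _ => by have := hc a; omega)
        _ = S.toFinset.card * (e - 1) := by rw [Finset.sum_const, smul_eq_mul]
    have h3 : S.toFinset.card ≤ Fintype.card G := Finset.card_le_univ _
    have h4 : (Multiset.card S : ℕ) ≤ Fintype.card G * (e - 1) := by
      rw [h1]; exact le_trans h2 (Nat.mul_le_mul_right _ h3)
    omega
  obtain ⟨g, hg⟩ := hex
  refine ⟨Multiset.replicate e g, Multiset.le_count_iff_replicate_le.mp hg, ?_, ?_⟩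
  · rw [Multiset.sum_replicate, hedef]
    exact AddMonoid.exponent_nsmul_eq_zero g
  · exact Multiset.card_replicate _ _

/-- From the hypothesis at primes. -/
lemma zs_prime {p : ℕ} (hp : p.Prime)
    (h3 : egz (ZMod p × ZMod p × ZMod p) < 20370 * (p - 1) + 1) :
    ZSProp (ZMod p × ZMod p × ZMod p) p (20370 * (p - 1) + 1) := by
  haveI : NeZero p := ⟨hp.pos.ne'⟩
  have hexp : AddMonoid.exponent (ZMod p × ZMod p × ZMod p) = p := exponent_triple p
  rw [egz_eq, hexp] at h3
  have hne : {t | ZSProp (ZMod p × ZMod p × ZMod p) p t}.Nonempty :=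
    ⟨_, hexp ▸ zs_nonempty (ZMod p × ZMod p × ZMod p) (by rw [hexp]; exact hp.pos)⟩
  have hmem : sInf {t | ZSProp (ZMod p × ZMod p × ZMod p) p t}
      ∈ {t | ZSProp (ZMod p × ZMod p × ZMod p) p t} := Nat.sInf_mem hne
  exact ZSProp.mono hmem (by omega)

lemma Multiset.exists_le_of_le_map {α β : Type*} {f : α → β} {s : Multiset β}
    {t : Multiset α} (h : s ≤ t.map f) : ∃ s' ≤ t, s'.map f = s := by
  classical
  induction s using Multiset.induction_on generalizing t with
  | empty => exact ⟨0, Multiset.zero_le t, rfl⟩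
  | cons b s ih =>
    have hb : b ∈ Multiset.map f t := Multiset.mem_of_le h (Multiset.mem_cons_self b s)
    obtain ⟨a, hat, rfl⟩ := Multiset.mem_map.mp hb
    have h1 : s ≤ (Multiset.map f t).erase (f a) := by
      have := Multiset.erase_le_erase (f a) h
      rwa [Multiset.erase_cons_head] at this
    have h2 : (Multiset.map f t).erase (f a) = Multiset.map f (t.erase a) := by
      have hc : a ::ₘ t.erase a = t := Multiset.cons_erase hat
      calc (Multiset.map f t).erase (f a)
          = (Multiset.map f (a ::ₘ t.erase a)).erase (f a) := by rw [hc]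
        _ = Multiset.map f (t.erase a) := by
            rw [Multiset.map_cons, Multiset.erase_cons_head]
    rw [h2] at h1
    obtain ⟨s', hs', hmap⟩ := ih h1
    exact ⟨a ::ₘ s', le_trans (Multiset.cons_le_cons a hs')
      (le_of_eq (Multiset.cons_erase hat)), by rw [Multiset.map_cons, hmap]⟩

lemma sum_of_multiset_sum {G : Type*} [AddCommGroup G] (L : Multiset (Multiset G)) :
    L.sum.sum = (L.map Multiset.sum).sum := by
  induction L using Multiset.induction_on with
  | empty => simp
  | cons T L ih => simp [Multiset.sum_cons, ih]

lemma card_of_multiset_sum {G : Type*} (L : Multiset (Multiset G)) :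
    Multiset.card L.sum = (L.map Multiset.card).sum := by
  induction L using Multiset.induction_on with
  | empty => simp
  | cons T L ih => simp [Multiset.sum_cons, ih]

lemma multiset_sum_le_sum {G : Type*} {L L' : Multiset (Multiset G)} (h : L' ≤ L) :
    L'.sum ≤ L.sum := by
  obtain ⟨u, rfl⟩ := Multiset.le_iff_exists_add.mp h
  rw [Multiset.sum_add]
  exact le_add_right le_rfl

/-- Repeated extraction of disjoint length-`e` subsequences whose image sums vanish. -/
lemma extract {G H : Type*} [AddCommGroup G] [AddCommGroup H] (f : G →+ H)
    {e t : ℕ} (hZ : ZSProp H e t) :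
    ∀ (k : ℕ) (S : Multiset G), t + e * k ≤ Multiset.card S + e →
      ∃ L : Multiset (Multiset G), Multiset.card L = k ∧ L.sum ≤ S ∧
        ∀ T ∈ L, Multiset.card T = e ∧ f T.sum = 0 := by
  classical
  intro k
  induction k with
  | zero => intro S _; exact ⟨0, rfl, Multiset.zero_le S, by simp⟩
  | succ k ih =>
    intro S hcard
    have hek : e * (k + 1) = e * k + e := by ring
    have ht : t ≤ Multiset.card S := by omega
    obtain ⟨T', hT'le, hT'sum, hT'card⟩ := hZ (S.map f)
      (by rwa [Multiset.card_map])
    obtain ⟨T, hTS, hTmap⟩ := Multiset.exists_le_of_le_map hT'le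
    have hTcard : Multiset.card T = e := by
      rw [← hT'card, ← hTmap, Multiset.card_map]
    have hfT : f T.sum = 0 := by
      rw [f.map_multiset_sum, hTmap, hT'sum]
    have heS : e ≤ Multiset.card S := hTcard ▸ Multiset.card_le_card hTS
    have hsub : t + e * k ≤ Multiset.card (S - T) + e := by
      rw [Multiset.card_sub hTS, hTcard]
      omega
    obtain ⟨L, hLcard, hLle, hLmem⟩ := ih (S - T) hsub
    refine ⟨T ::ₘ L, by simp [hLcard], ?_, ?_⟩
    · rw [Multiset.sum_cons]
      calc T + L.sum ≤ T + (S - T) := add_le_add_right hLle T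
        _ = S := add_tsub_cancel_of_le hTS
    · intro U hU
      rcases Multiset.mem_cons.mp hU with h | h
      · subst h; exact ⟨hTcard, hfT⟩
      · exact hLmem U h

lemma cast_val_sum {n : ℕ} [NeZero n] (X : Multiset (ZMod n)) :
    X.sum = (((X.map ZMod.val).sum : ℕ) : ZMod n) := by
  induction X using Multiset.induction_on with
  | empty => simp
  | cons a Y ih =>
    rw [Multiset.map_cons, Multiset.sum_cons, Multiset.sum_cons, Nat.cast_add,
      ZMod.natCast_zmod_val, ih]

/-- Scalar division lemma. -/
lemma scalar_lemma {p m : ℕ} [hpn : NeZero p] [hmn : NeZero m]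
    (X : Multiset (ZMod (p * m)))
    (hd : ∀ x ∈ X, p ∣ x.val)
    (hz : (X.map (fun x : ZMod (p * m) => ((x.val / p : ℕ) : ZMod m))).sum = 0) :
    X.sum = 0 := by
  haveI : NeZero (p * m) := ⟨Nat.mul_ne_zero hpn.out hmn.out⟩
  have h1 : X.sum = (((X.map ZMod.val).sum : ℕ) : ZMod (p * m)) :=
    cast_val_sum X
  have h2 : (X.map ZMod.val).sum
      = p * (X.map (fun x : ZMod (p*m) => x.val / p)).sum := by
    rw [← Multiset.sum_map_mul_left]
    exact congrArg Multiset.sum (Multiset.map_congr rfl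
      (fun x hx => (Nat.mul_div_cancel' (hd x hx)).symm))
  have h3 : (m : ℕ) ∣ (X.map (fun x : ZMod (p*m) => x.val / p)).sum := by
    refine (ZMod.natCast_eq_zero_iff _ m).mp ?_
    rw [Nat.cast_multiset_sum, Multiset.map_map]
    exact hz
  obtain ⟨c, hc⟩ := h3
  rw [h1, h2, hc, ← mul_assoc, Nat.cast_mul, ZMod.natCast_self, zero_mul]

/-- The multiplicative induction step. -/
lemma mult_step {p m : ℕ} (hp : 2 ≤ p) (hm : 2 ≤ m)
    (Hp : ZSProp (ZMod p × ZMod p × ZMod p) p (20370 * (p - 1) + 1))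
    (Hm : ZSProp (ZMod m × ZMod m × ZMod m) m (20370 * (m - 1) + 1)) :
    ZSProp (ZMod (p * m) × ZMod (p * m) × ZMod (p * m)) (p * m)
      (20370 * (p * m - 1) + 1) := by
  haveI : NeZero p := ⟨by omega⟩
  haveI : NeZero m := ⟨by omega⟩
  haveI : NeZero (p * m) := ⟨Nat.mul_ne_zero (by omega) (by omega)⟩
  have hdvd : p ∣ p * m := Dvd.intro m rfl
  set φ : ZMod (p * m) →+* ZMod p := ZMod.castHom hdvd (ZMod p) with hφ
  set f : (ZMod (p*m) × ZMod (p*m) × ZMod (p*m)) →+ (ZMod p × ZMod p × ZMod p) :=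
    AddMonoidHom.prodMap φ.toAddMonoidHom
      (AddMonoidHom.prodMap φ.toAddMonoidHom φ.toAddMonoidHom) with hf
  set dn : ZMod (p * m) → ZMod m := fun x => ((x.val / p : ℕ) : ZMod m) with hdn
  set g : (ZMod (p*m) × ZMod (p*m) × ZMod (p*m)) → (ZMod m × ZMod m × ZMod m) :=
    fun x => (dn x.1, dn x.2.1, dn x.2.2) with hg
  intro S hS
  -- arithmetic: bound for extraction
  have harith : (20370 * (p - 1) + 1) + p * (20370 * (m - 1) + 1)
      ≤ Multiset.card S + p := by
    obtain ⟨a, rfl⟩ : ∃ a, p = a + 2 := ⟨p - 2, by omega⟩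
    obtain ⟨b, rfl⟩ : ∃ b, m = b + 2 := ⟨m - 2, by omega⟩
    have hcard : 20370 * ((a + 2) * (b + 2) - 1) + 1 ≤ Multiset.card S := hS
    have hexpand : (a + 2) * (b + 2) - 1 = a * b + 2 * a + 2 * b + 3 := by
      have : (a + 2) * (b + 2) = a * b + 2 * a + 2 * b + 4 := by ring
      omega
    rw [hexpand] at hcard
    have e1 : (a + 2) - 1 = a + 1 := by omega
    have e2 : (b + 2) - 1 = b + 1 := by omega
    rw [e1, e2]
    nlinarith
  obtain ⟨L, hLcard, hLle, hLmem⟩ := extract f Hp (20370 * (m - 1) + 1) S harith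
  -- apply Hm to the pushed-down sums
  set W : Multiset (ZMod m × ZMod m × ZMod m) := L.map (fun T => g T.sum) with hW
  have hWcard : 20370 * (m - 1) + 1 ≤ Multiset.card W := by
    rw [hW, Multiset.card_map, hLcard]
  obtain ⟨W', hW'le, hW'sum, hW'card⟩ := Hm W hWcard
  obtain ⟨L', hL'le, hL'map⟩ := Multiset.exists_le_of_le_map hW'le
  have hL'card : Multiset.card L' = m := by
    have h := congrArg Multiset.card hL'map
    rwa [Multiset.card_map, hW'card] at h
  refine ⟨L'.sum, le_trans (multiset_sum_le_sum hL'le) hLle, ?_, ?_⟩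
  · -- zero sum
    obtain ⟨X, hX⟩ : ∃ X : Multiset (ZMod (p*m) × ZMod (p*m) × ZMod (p*m)),
        L'.map Multiset.sum = X := ⟨_, rfl⟩
    have hsum : L'.sum.sum = X.sum := hX ▸ sum_of_multiset_sum L'
    have hXmem : ∀ x ∈ X, f x = 0 := by
      intro x hx
      rw [← hX] at hx
      obtain ⟨T, hT, rfl⟩ := Multiset.mem_map.mp hx
      exact (hLmem T (Multiset.mem_of_le hL'le hT)).2
    have hXg : (X.map g).sum = 0 := by
      rw [← hX]
      simp only [Multiset.map_map, Function.comp_def]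
      rw [hL'map, hW'sum]
    have key : ∀ (cn : (ZMod (p*m) × ZMod (p*m) × ZMod (p*m)) →+ ZMod (p*m))
        (cm : (ZMod m × ZMod m × ZMod m) →+ ZMod m)
        (cp : (ZMod p × ZMod p × ZMod p) → ZMod p),
        (∀ x, cm (g x) = dn (cn x)) → (∀ x, cp (f x) = φ (cn x)) → cp 0 = 0 →
        cn X.sum = 0 := by
      intro cn cm cp hcm hcp hcp0
      rw [cn.map_multiset_sum]
      refine scalar_lemma (p := p) (m := m) (X.map cn) ?_ ?_
      · intro y hy
        obtain ⟨x, hx, rfl⟩ := Multiset.mem_map.mp hy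
        have h0 : φ (cn x) = 0 := by rw [← hcp, hXmem x hx, hcp0]
        rw [hφ, ZMod.castHom_apply, ← ZMod.natCast_val (cn x)] at h0
        exact (ZMod.natCast_eq_zero_iff _ _).mp h0
      · have heq : Multiset.map (fun x : ZMod (p*m) => ((x.val / p : ℕ) : ZMod m))
            (X.map cn) = (X.map g).map cm := by
          simp only [Multiset.map_map, Function.comp_def]
          exact Multiset.map_congr rfl (fun x _ => (hcm x).symm)
        rw [heq, ← cm.map_multiset_sum, hXg, map_zero]
    have e1 : X.sum.1 = 0 := by
      refine key (AddMonoidHom.fst _ _) (AddMonoidHom.fst _ _) Prod.fst ?_ ?_ rfl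
      · intro x; rfl
      · intro x; rfl
    have e2 : X.sum.2.1 = 0 := by
      refine key ((AddMonoidHom.fst _ _).comp (AddMonoidHom.snd _ _))
        ((AddMonoidHom.fst _ _).comp (AddMonoidHom.snd _ _))
        (fun z => z.2.1) ?_ ?_ rfl
      · intro x; rfl
      · intro x; rfl
    have e3 : X.sum.2.2 = 0 := by
      refine key ((AddMonoidHom.snd _ _).comp (AddMonoidHom.snd _ _))
        ((AddMonoidHom.snd _ _).comp (AddMonoidHom.snd _ _))
        (fun z => z.2.2) ?_ ?_ rfl
      · intro x; rfl
      · intro x; rfl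
    rw [hsum]
    rw [show X.sum = (X.sum.1, X.sum.2.1, X.sum.2.2) from rfl, e1, e2, e3]
    rfl
  · -- cardinality
    have hcards : (L'.map Multiset.card) = Multiset.map (fun _ => p) L' :=
      Multiset.map_congr rfl (fun T hT => (hLmem T (Multiset.mem_of_le hL'le hT)).1)
    rw [card_of_multiset_sum, hcards, Multiset.map_const', Multiset.sum_replicate,
      smul_eq_mul, hL'card, mul_comm]

lemma main_zs
    (h3 : ∀ p : ℕ, p.Prime → egz (ZMod p × ZMod p × ZMod p) < 20370 * (p - 1) + 1) :
    ∀ n : ℕ, 2 ≤ n →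
      ZSProp (ZMod n × ZMod n × ZMod n) n (20370 * (n - 1) + 1) := by
  intro n
  induction n using Nat.strong_induction_on with
  | _ n ih =>
    intro hn
    by_cases hp : n.Prime
    · exact zs_prime hp (h3 n hp)
    · have hn1 : n ≠ 1 := by omega
      set p := n.minFac with hpdef
      have hpp : p.Prime := Nat.minFac_prime hn1
      have hdvd : p ∣ n := Nat.minFac_dvd n
      obtain ⟨m, hnm⟩ : ∃ m, n = p * m := ⟨n / p, (Nat.mul_div_cancel' hdvd).symm⟩
      have hm0 : m ≠ 0 := by
        intro h; rw [h, mul_zero] at hnm; omega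
      have hm1 : m ≠ 1 := by
        intro h; rw [h, mul_one] at hnm; exact hp (hnm ▸ hpp)
      have hm2 : 2 ≤ m := by omega
      have hmlt : m < n := by
        rw [hnm]
        exact lt_mul_of_one_lt_left (by omega) hpp.one_lt
      have IH := ih m hmlt hm2
      have key := mult_step hpp.two_le hm2 (zs_prime hpp (h3 p hpp)) IH
      rw [hnm]
      exact key

theorem stmt_11
    (h3 : ∀ p : ℕ, p.Prime → egz (ZMod p × ZMod p × ZMod p) < 20370 * (p - 1) + 1)
    (h2 : ∀ p : ℕ, p.Prime → egz (ZMod p × ZMod p) = 4 * (p - 1) + 1)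
    (h1 : ∀ p : ℕ, p.Prime → egz (ZMod p) = 2 * (p - 1) + 1) :
    ∀ n : ℕ, 2 ≤ n → egz (ZMod n × ZMod n × ZMod n) ≤ 20370 * (n - 1) + 1 := by
  intro n hn
  rw [egz_eq, exponent_triple]
  exact Nat.sInf_le (main_zs h3 n hn)
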